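/- Suppose the feature vector decomposes as X = (X₀, X̃) where X₀ = g(S) is a deterministic function of S, and under the joint distribution P of (X₀, X̃, Y, S) the component X̃ is independent of S and also conditionally independent of S given Y. Then the ratio P(X = x | Y = y, S = s) / P(X = x | S = s) does not depend on s: for all x = (x₀, x̃), y, s for which the conditional probabilities are defined and P(X = x | S = s) > 0, the ratio equals P(X̃ = x̃ | Y = y) / P(X̃ = x̃), a function φ(x, y) of (x, y) alone. -/
import Mathlib


open Finset

noncomputable section

variable {𝒳₀ 𝒳t 𝒴 𝒮 : Type*} [Fintype 𝒳₀] [Fintype 𝒳t] [Fintype 𝒴] [Fintype 𝒮]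

/-- Marginal distribution of `X̃` under the joint `P` of `(X₀, X̃, Y, S)`. -/
def margXt (P : 𝒳₀ → 𝒳t → 𝒴 → 𝒮 → ℝ) (xt : 𝒳t) : ℝ := ∑ x₀, ∑ y, ∑ s, P x₀ xt y s

/-- Marginal distribution of `S`. -/
def margS (P : 𝒳₀ → 𝒳t → 𝒴 → 𝒮 → ℝ) (s : 𝒮) : ℝ := ∑ x₀, ∑ xt, ∑ y, P x₀ xt y s

/-- Marginal distribution of `Y`. -/
def margY (P : 𝒳₀ → 𝒳t → 𝒴 → 𝒮 → ℝ) (y : 𝒴) : ℝ := ∑ x₀, ∑ xt, ∑ s, P x₀ xt y s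

/-- Marginal distribution of `(X̃, S)`. -/
def margXtS (P : 𝒳₀ → 𝒳t → 𝒴 → 𝒮 → ℝ) (xt : 𝒳t) (s : 𝒮) : ℝ := ∑ x₀, ∑ y, P x₀ xt y s

/-- Marginal distribution of `(X̃, Y)`. -/
def margXtY (P : 𝒳₀ → 𝒳t → 𝒴 → 𝒮 → ℝ) (xt : 𝒳t) (y : 𝒴) : ℝ := ∑ x₀, ∑ s, P x₀ xt y s

/-- Marginal distribution of `(X̃, Y, S)`. -/
def margXtYS (P : 𝒳₀ → 𝒳t → 𝒴 → 𝒮 → ℝ) (xt : 𝒳t) (y : 𝒴) (s : 𝒮) : ℝ := ∑ x₀, P x₀ xt y s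

/-- Marginal distribution of `(Y, S)`. -/
def margYS (P : 𝒳₀ → 𝒳t → 𝒴 → 𝒮 → ℝ) (y : 𝒴) (s : 𝒮) : ℝ := ∑ x₀, ∑ xt, P x₀ xt y s

/-- Marginal distribution of `(X, S) = (X₀, X̃, S)`. -/
def margXS (P : 𝒳₀ → 𝒳t → 𝒴 → 𝒮 → ℝ) (x₀ : 𝒳₀) (xt : 𝒳t) (s : 𝒮) : ℝ := ∑ y, P x₀ xt y s

/-- **Remark 1.** Suppose `X = (X₀, X̃)` with `X₀ = g(S)` a deterministic function of `S`,
`X̃` independent of `S`, and `X̃` conditionally independent of `S` given `Y`. Then, whenever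
the conditional probabilities are defined (`P(Y=y, S=s) > 0`) and `P(X=x | S=s) > 0`, the
ratio `P(X=x | Y=y, S=s) / P(X=x | S=s)` equals `P(X̃=x̃ | Y=y) / P(X̃=x̃)`, a function of
`(x, y)` alone. -/
theorem condRatio_indep_of_sensitive
    (P : 𝒳₀ → 𝒳t → 𝒴 → 𝒮 → ℝ)
    (hP0 : ∀ x₀ xt y s, 0 ≤ P x₀ xt y s)
    (hP1 : ∑ x₀, ∑ xt, ∑ y, ∑ s, P x₀ xt y s = 1)
    (g : 𝒮 → 𝒳₀)
    (hdet : ∀ x₀ xt y s, x₀ ≠ g s → P x₀ xt y s = 0)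
    (hindep : ∀ xt s, margXtS P xt s = margXt P xt * margS P s)
    (hcondindep : ∀ xt y s, margXtYS P xt y s * margY P y = margXtY P xt y * margYS P y s) :
    ∀ x₀ xt y s, 0 < margYS P y s → 0 < margXS P x₀ xt s / margS P s →
      (P x₀ xt y s / margYS P y s) / (margXS P x₀ xt s / margS P s)
        = (margXtY P xt y / margY P y) / margXt P xt := by
  intro x₀ xt y s hYS hXdiv
  have hS : 0 < margS P s := by
    refine lt_of_lt_of_le hYS ?_
    unfold margS margYS
    refine Finset.sum_le_sum fun a _ => Finset.sum_le_sum fun b _ => ?_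
    exact Finset.single_le_sum (fun j _ => hP0 a b j s) (Finset.mem_univ y)
  have hY : 0 < margY P y := by
    refine lt_of_lt_of_le hYS ?_
    unfold margY margYS
    refine Finset.sum_le_sum fun a _ => Finset.sum_le_sum fun b _ => ?_
    exact Finset.single_le_sum (fun j _ => hP0 a b y j) (Finset.mem_univ s)
  have hXS : 0 < margXS P x₀ xt s := by
    have := mul_pos hXdiv hS
    rwa [div_mul_cancel₀ _ hS.ne'] at this
  have hx0 : x₀ = g s := by
    by_contra h
    have : margXS P x₀ xt s = 0 :=
      Finset.sum_eq_zero fun j _ => hdet _ _ _ _ h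
    linarith
  subst hx0
  have hXtS : margXtS P xt s = margXS P (g s) xt s := by
    unfold margXtS margXS
    refine Finset.sum_eq_single_of_mem (g s) (Finset.mem_univ _) ?_
    intro b _ hb
    exact Finset.sum_eq_zero fun j _ => hdet _ _ _ _ hb
  have hXtYS : margXtYS P xt y s = P (g s) xt y s := by
    unfold margXtYS
    refine Finset.sum_eq_single_of_mem (g s) (Finset.mem_univ _) ?_
    intro b _ hb
    exact hdet _ _ _ _ hb
  have hXt : 0 < margXt P xt := by
    have h2 : 0 < margXt P xt * margS P s := by
      rw [← hindep, hXtS]; exact hXS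
    by_contra h
    push_neg at h
    nlinarith
  have hc := hcondindep xt y s
  rw [← hXtYS, ← hXtS, hindep]
  field_simp
  nlinarith [hc, mul_pos hS hY, mul_pos hXt hYS]
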